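/- Let h > 0 and N ∈ ℕ with N ≥ 3. Let v, w : ℝ → ℝ be continuous, equal to 0 on (−∞, h] ∪ [(N−1)h, ∞), and affine on each element [(i−1)h, i·h] with slope a_i (for v) and b_i (for w), i = 1,…,N (so that necessarily a_1 = a_N = b_1 = b_N = 0). Then ∫₀^{Nh} ∫₀^{Nh} 1_{{|y−x|<h}} · h^{−3} · (v(y) − v(x))·(w(y) − w(x)) dy dx = (2h/3)·∑_{i=1}^{N} a_i·b_i − (h/12)·∑_{i=1}^{N−1} (a_{i+1} − a_i)·(b_{i+1} − b_i). -/

import Mathlib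

open MeasureTheory

private lemma hasDerivAt_P4 (c0 c1 c2 c3 x : ℝ) :
    HasDerivAt (fun x : ℝ => c0 * x + ((c1/2) * x^2 + ((c2/3) * x^3 + (c3/4) * x^4)))
      (c0 + (c1*x + (c2*x^2 + c3*x^3))) x := by
  have h :=
    ((hasDerivAt_id x).const_mul c0).add
      (((hasDerivAt_pow 2 x).const_mul (c1/2)).add
        (((hasDerivAt_pow 3 x).const_mul (c2/3)).add
          ((hasDerivAt_pow 4 x).const_mul (c3/4))))
  refine h.congr_deriv ?_
  push_cast
  ring

private lemma integral_poly3 (c0 c1 c2 c3 l u : ℝ) :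
    (∫ x in l..u, (c0 + (c1*x + (c2*x^2 + c3*x^3)))) =
      (c0*u + ((c1/2)*u^2 + ((c2/3)*u^3 + (c3/4)*u^4)))
        - (c0*l + ((c1/2)*l^2 + ((c2/3)*l^3 + (c3/4)*l^4))) := by
  refine intervalIntegral.integral_eq_sub_of_hasDerivAt
    (fun x _ => hasDerivAt_P4 c0 c1 c2 c3 x) ?_
  apply Continuous.intervalIntegrable
  fun_prop

private lemma integral_of_eq_poly3 (f : ℝ → ℝ) (c0 c1 c2 c3 l u : ℝ)
    (hf : ∀ x, f x = c0 + (c1*x + (c2*x^2 + c3*x^3))) :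
    (∫ x in l..u, f x)
      = c0*(u-l) + c1*(u^2-l^2)/2 + c2*(u^3-l^3)/3 + c3*(u^4-l^4)/4 := by
  rw [intervalIntegral.integral_congr (g := fun x => c0 + (c1*x + (c2*x^2 + c3*x^3)))
    (fun x _ => hf x)]
  rw [integral_poly3]
  ring

private noncomputable def Phi (c α β γ y : ℝ) : ℝ :=
  c * (α*y + ((β/2)*y^2 + ((γ/3)*y^3 + ((0:ℝ)/4)*y^4)))

private lemma int_aff (c V A W B p q l u : ℝ) :
    (∫ y in l..u, c * ((V + A*(y - p)) * (W + B*(y - q)))) =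
      Phi c ((V-A*p)*(W-B*q)) ((V-A*p)*B + (W-B*q)*A) (A*B) u
        - Phi c ((V-A*p)*(W-B*q)) ((V-A*p)*B + (W-B*q)*A) (A*B) l := by
  refine intervalIntegral.integral_eq_sub_of_hasDerivAt (fun y _ => ?_) ?_
  · have h := (hasDerivAt_P4 ((V-A*p)*(W-B*q)) ((V-A*p)*B + (W-B*q)*A) (A*B) 0 y).const_mul c
    refine h.congr_deriv ?_
    ring
  · apply Continuous.intervalIntegrable
    fun_prop

private lemma integral_congr_Ioo {f g : ℝ → ℝ} {l u : ℝ} (hlu : l ≤ u)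
    (hfg : ∀ y ∈ Set.Ioo l u, f y = g y) :
    (∫ y in l..u, f y) = ∫ y in l..u, g y := by
  rw [intervalIntegral.integral_of_le hlu, intervalIntegral.integral_of_le hlu,
    MeasureTheory.integral_Ioc_eq_integral_Ioo, MeasureTheory.integral_Ioc_eq_integral_Ioo]
  exact MeasureTheory.setIntegral_congr_fun measurableSet_Ioo hfg

private lemma intervalIntegrable_congr_Ioo {f g : ℝ → ℝ} {l u : ℝ} (hlu : l ≤ u)
    (hg : Continuous g) (hfg : ∀ y ∈ Set.Ioo l u, f y = g y) :
    IntervalIntegrable f volume l u := by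
  rw [intervalIntegrable_iff_integrableOn_Ioc_of_le hlu]
  have h1 : IntegrableOn g (Set.Ioc l u) volume := hg.integrableOn_Ioc
  refine h1.congr ?_
  rw [Filter.EventuallyEq, MeasureTheory.ae_iff, Measure.restrict_apply' measurableSet_Ioc]
  refine measure_mono_null (fun y hy => ?_) (Real.volume_singleton (a := u))
  obtain ⟨hne, hy2⟩ := hy
  simp only [Set.mem_singleton_iff]
  by_contra hyu
  exact hne ((hfg y ⟨hy2.1, lt_of_le_of_ne hy2.2 hyu⟩).symm)

private lemma finish_cell (F : ℝ → ℝ) (s h c0 c1 c2 c3 : ℝ) (hh : 0 < h)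
    (heart : ∀ x ∈ Set.Ioo s (s+h),
      F x = c0 + (c1*(x-s) + (c2*(x-s)^2 + c3*(x-s)^3))) :
    IntervalIntegrable F volume s (s+h) ∧
      (∫ x in s..(s+h), F x) = c0*h + c1*h^2/2 + c2*h^3/3 + c3*h^4/4 := by
  have hle : s ≤ s + h := by linarith
  constructor
  · exact intervalIntegrable_congr_Ioo hle (by fun_prop) heart
  · rw [integral_congr_Ioo hle heart,
      integral_of_eq_poly3 _ (c0 - c1*s + c2*s^2 - c3*s^3) (c1 - 2*c2*s + 3*c3*s^2)
        (c2 - 3*c3*s) c3 s (s+h) (fun x => by ring)]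
    ring

private lemma heart_generic (h : ℝ) (hh : 0 < h) (v w : ℝ → ℝ)
    (A0 A A' B0 B B' s L R : ℝ)
    (hL : L ≤ s - h) (hR : s + 2*h ≤ R)
    (hv1 : ∀ y ∈ Set.Icc (s-h) s, v y = v s - A0*(s-y))
    (hv2 : ∀ y ∈ Set.Icc s (s+h), v y = v s + A*(y-s))
    (hv3 : ∀ y ∈ Set.Icc (s+h) (s+2*h), v y = (v s + A*h) + A'*(y-(s+h)))
    (hw1 : ∀ y ∈ Set.Icc (s-h) s, w y = w s - B0*(s-y))
    (hw2 : ∀ y ∈ Set.Icc s (s+h), w y = w s + B*(y-s))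
    (hw3 : ∀ y ∈ Set.Icc (s+h) (s+2*h), w y = (w s + B*h) + B'*(y-(s+h)))
    (x : ℝ) (hx : x ∈ Set.Ioo s (s+h)) :
    (∫ y in L..R, if |y - x| < h then h⁻¹ ^ 3 * ((v y - v x) * (w y - w x)) else 0) =
      (h⁻¹^3*(A0*B0 + A*B)*h^3/3)
      + ((h⁻¹^3*(-(A0*B0) + (A0*B + A*B0)/2)*h^2) * (x-s)
      + ((h⁻¹^3*(A0*B0 - (A0*B + A*B0) + (A*B' + A'*B)/2)*h) * (x-s)^2
      + (h⁻¹^3*(-(A0*B0)/3 + (A0*B + A*B0)/2 - (A*B' + A'*B)/2 + A'*B'/3)) * (x-s)^3)) := by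
  obtain ⟨hx1, hx2⟩ := hx
  have hvx : v x = v s + A*(x-s) := hv2 x ⟨hx1.le, hx2.le⟩
  have hwx : w x = w s + B*(x-s) := hw2 x ⟨hx1.le, hx2.le⟩
  have hle1 : L ≤ x - h := by linarith
  have hle2 : x - h ≤ s := by linarith
  have hle3 : s ≤ s + h := by linarith
  have hle4 : s + h ≤ x + h := by linarith
  have hle5 : x + h ≤ R := by linarith
  have e1 : ∀ y ∈ Set.Ioo L (x-h),
      (if |y - x| < h then h⁻¹ ^ 3 * ((v y - v x) * (w y - w x)) else 0) = (0:ℝ) := by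
    intro y hy
    have h1 : h ≤ -(y-x) := by linarith [hy.2]
    exact if_neg (not_lt.2 (h1.trans (neg_le_abs _)))
  have e2 : ∀ y ∈ Set.Ioo (x-h) s,
      (if |y - x| < h then h⁻¹ ^ 3 * ((v y - v x) * (w y - w x)) else 0) =
        h⁻¹ ^ 3 * ((-(A*(x-s)) + A0*(y-s)) * (-(B*(x-s)) + B0*(y-s))) := by
    intro y hy
    have hc : |y - x| < h := abs_sub_lt_iff.2 ⟨by linarith [hy.2], by linarith [hy.1]⟩
    rw [if_pos hc, hv1 y ⟨by linarith [hy.1], hy.2.le⟩, hw1 y ⟨by linarith [hy.1], hy.2.le⟩,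
      hvx, hwx]
    ring
  have e3 : ∀ y ∈ Set.Ioo s (s+h),
      (if |y - x| < h then h⁻¹ ^ 3 * ((v y - v x) * (w y - w x)) else 0) =
        h⁻¹ ^ 3 * ((-(A*(x-s)) + A*(y-s)) * (-(B*(x-s)) + B*(y-s))) := by
    intro y hy
    have hc : |y - x| < h := abs_sub_lt_iff.2 ⟨by linarith [hy.2], by linarith [hy.1]⟩
    rw [if_pos hc, hv2 y ⟨hy.1.le, hy.2.le⟩, hw2 y ⟨hy.1.le, hy.2.le⟩, hvx, hwx]
    ring
  have e4 : ∀ y ∈ Set.Ioo (s+h) (x+h),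
      (if |y - x| < h then h⁻¹ ^ 3 * ((v y - v x) * (w y - w x)) else 0) =
        h⁻¹ ^ 3 * ((A*(s+h-x) + A'*(y-(s+h))) * (B*(s+h-x) + B'*(y-(s+h)))) := by
    intro y hy
    have hc : |y - x| < h := abs_sub_lt_iff.2 ⟨by linarith [hy.2], by linarith [hy.1]⟩
    rw [if_pos hc, hv3 y ⟨hy.1.le, by linarith [hy.2]⟩, hw3 y ⟨hy.1.le, by linarith [hy.2]⟩,
      hvx, hwx]
    ring
  have e5 : ∀ y ∈ Set.Ioo (x+h) R,
      (if |y - x| < h then h⁻¹ ^ 3 * ((v y - v x) * (w y - w x)) else 0) = (0:ℝ) := by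
    intro y hy
    have h1 : h ≤ y - x := by linarith [hy.1]
    exact if_neg (not_lt.2 (h1.trans (le_abs_self _)))
  have I1 := intervalIntegrable_congr_Ioo hle1 continuous_const e1
  have I2 := intervalIntegrable_congr_Ioo hle2 (by fun_prop) e2
  have I3 := intervalIntegrable_congr_Ioo hle3 (by fun_prop) e3
  have I4 := intervalIntegrable_congr_Ioo hle4 (by fun_prop) e4
  have I5 := intervalIntegrable_congr_Ioo hle5 continuous_const e5
  rw [← intervalIntegral.integral_add_adjacent_intervals I1 (I2.trans (I3.trans (I4.trans I5))),
      ← intervalIntegral.integral_add_adjacent_intervals I2 (I3.trans (I4.trans I5)),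
      ← intervalIntegral.integral_add_adjacent_intervals I3 (I4.trans I5),
      ← intervalIntegral.integral_add_adjacent_intervals I4 I5,
      integral_congr_Ioo hle1 e1, integral_congr_Ioo hle2 e2, integral_congr_Ioo hle3 e3,
      integral_congr_Ioo hle4 e4, integral_congr_Ioo hle5 e5,
      int_aff, int_aff, int_aff]
  simp only [Phi, intervalIntegral.integral_zero]
  ring
private lemma heart_first (h : ℝ) (hh : 0 < h) (v w : ℝ → ℝ)
    (A A' B B' s R : ℝ)
    (hR : s + 2*h ≤ R)
    (hv2 : ∀ y ∈ Set.Icc s (s+h), v y = v s + A*(y-s))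
    (hv3 : ∀ y ∈ Set.Icc (s+h) (s+2*h), v y = (v s + A*h) + A'*(y-(s+h)))
    (hw2 : ∀ y ∈ Set.Icc s (s+h), w y = w s + B*(y-s))
    (hw3 : ∀ y ∈ Set.Icc (s+h) (s+2*h), w y = (w s + B*h) + B'*(y-(s+h)))
    (x : ℝ) (hx : x ∈ Set.Ioo s (s+h)) :
    (∫ y in s..R, if |y - x| < h then h⁻¹ ^ 3 * ((v y - v x) * (w y - w x)) else 0) =
      (h⁻¹^3*(A*B)*h^3/3)
      + ((0:ℝ) * (x-s)
      + ((h⁻¹^3*(-(A*B) + (A*B' + A'*B)/2)*h) * (x-s)^2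
      + (h⁻¹^3*(A*B - (A*B' + A'*B)/2 + A'*B'/3)) * (x-s)^3)) := by
  obtain ⟨hx1, hx2⟩ := hx
  have hvx : v x = v s + A*(x-s) := hv2 x ⟨hx1.le, hx2.le⟩
  have hwx : w x = w s + B*(x-s) := hw2 x ⟨hx1.le, hx2.le⟩
  have hle3 : s ≤ s + h := by linarith
  have hle4 : s + h ≤ x + h := by linarith
  have hle5 : x + h ≤ R := by linarith
  have e3 : ∀ y ∈ Set.Ioo s (s+h),
      (if |y - x| < h then h⁻¹ ^ 3 * ((v y - v x) * (w y - w x)) else 0) =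
        h⁻¹ ^ 3 * ((-(A*(x-s)) + A*(y-s)) * (-(B*(x-s)) + B*(y-s))) := by
    intro y hy
    have hc : |y - x| < h := abs_sub_lt_iff.2 ⟨by linarith [hy.2], by linarith [hy.1]⟩
    rw [if_pos hc, hv2 y ⟨hy.1.le, hy.2.le⟩, hw2 y ⟨hy.1.le, hy.2.le⟩, hvx, hwx]
    ring
  have e4 : ∀ y ∈ Set.Ioo (s+h) (x+h),
      (if |y - x| < h then h⁻¹ ^ 3 * ((v y - v x) * (w y - w x)) else 0) =
        h⁻¹ ^ 3 * ((A*(s+h-x) + A'*(y-(s+h))) * (B*(s+h-x) + B'*(y-(s+h)))) := by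
    intro y hy
    have hc : |y - x| < h := abs_sub_lt_iff.2 ⟨by linarith [hy.2], by linarith [hy.1]⟩
    rw [if_pos hc, hv3 y ⟨hy.1.le, by linarith [hy.2]⟩, hw3 y ⟨hy.1.le, by linarith [hy.2]⟩,
      hvx, hwx]
    ring
  have e5 : ∀ y ∈ Set.Ioo (x+h) R,
      (if |y - x| < h then h⁻¹ ^ 3 * ((v y - v x) * (w y - w x)) else 0) = (0:ℝ) := by
    intro y hy
    have h1 : h ≤ y - x := by linarith [hy.1]
    exact if_neg (not_lt.2 (h1.trans (le_abs_self _)))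
  have I3 := intervalIntegrable_congr_Ioo hle3 (by fun_prop) e3
  have I4 := intervalIntegrable_congr_Ioo hle4 (by fun_prop) e4
  have I5 := intervalIntegrable_congr_Ioo hle5 continuous_const e5
  rw [← intervalIntegral.integral_add_adjacent_intervals I3 (I4.trans I5),
      ← intervalIntegral.integral_add_adjacent_intervals I4 I5,
      integral_congr_Ioo hle3 e3, integral_congr_Ioo hle4 e4, integral_congr_Ioo hle5 e5,
      int_aff, int_aff]
  simp only [Phi, intervalIntegral.integral_zero]
  ring

private lemma heart_last (h : ℝ) (hh : 0 < h) (v w : ℝ → ℝ)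
    (A0 A B0 B s L : ℝ)
    (hL : L ≤ s - h)
    (hv1 : ∀ y ∈ Set.Icc (s-h) s, v y = v s - A0*(s-y))
    (hv2 : ∀ y ∈ Set.Icc s (s+h), v y = v s + A*(y-s))
    (hw1 : ∀ y ∈ Set.Icc (s-h) s, w y = w s - B0*(s-y))
    (hw2 : ∀ y ∈ Set.Icc s (s+h), w y = w s + B*(y-s))
    (x : ℝ) (hx : x ∈ Set.Ioo s (s+h)) :
    (∫ y in L..(s+h), if |y - x| < h then h⁻¹ ^ 3 * ((v y - v x) * (w y - w x)) else 0) =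
      (h⁻¹^3*(A0*B0 + A*B)*h^3/3)
      + ((h⁻¹^3*(-(A0*B0) + (A0*B + A*B0)/2 - A*B)*h^2) * (x-s)
      + ((h⁻¹^3*(A0*B0 - (A0*B + A*B0) + 2*(A*B))*h) * (x-s)^2
      + (h⁻¹^3*(-(A0*B0)/3 + (A0*B + A*B0)/2 - A*B)) * (x-s)^3)) := by
  obtain ⟨hx1, hx2⟩ := hx
  have hvx : v x = v s + A*(x-s) := hv2 x ⟨hx1.le, hx2.le⟩
  have hwx : w x = w s + B*(x-s) := hw2 x ⟨hx1.le, hx2.le⟩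
  have hle1 : L ≤ x - h := by linarith
  have hle2 : x - h ≤ s := by linarith
  have hle3 : s ≤ s + h := by linarith
  have e1 : ∀ y ∈ Set.Ioo L (x-h),
      (if |y - x| < h then h⁻¹ ^ 3 * ((v y - v x) * (w y - w x)) else 0) = (0:ℝ) := by
    intro y hy
    have h1 : h ≤ -(y-x) := by linarith [hy.2]
    exact if_neg (not_lt.2 (h1.trans (neg_le_abs _)))
  have e2 : ∀ y ∈ Set.Ioo (x-h) s,
      (if |y - x| < h then h⁻¹ ^ 3 * ((v y - v x) * (w y - w x)) else 0) =
        h⁻¹ ^ 3 * ((-(A*(x-s)) + A0*(y-s)) * (-(B*(x-s)) + B0*(y-s))) := by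
    intro y hy
    have hc : |y - x| < h := abs_sub_lt_iff.2 ⟨by linarith [hy.2], by linarith [hy.1]⟩
    rw [if_pos hc, hv1 y ⟨by linarith [hy.1], hy.2.le⟩, hw1 y ⟨by linarith [hy.1], hy.2.le⟩,
      hvx, hwx]
    ring
  have e3 : ∀ y ∈ Set.Ioo s (s+h),
      (if |y - x| < h then h⁻¹ ^ 3 * ((v y - v x) * (w y - w x)) else 0) =
        h⁻¹ ^ 3 * ((-(A*(x-s)) + A*(y-s)) * (-(B*(x-s)) + B*(y-s))) := by
    intro y hy
    have hc : |y - x| < h := abs_sub_lt_iff.2 ⟨by linarith [hy.2], by linarith [hy.1]⟩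
    rw [if_pos hc, hv2 y ⟨hy.1.le, hy.2.le⟩, hw2 y ⟨hy.1.le, hy.2.le⟩, hvx, hwx]
    ring
  have I1 := intervalIntegrable_congr_Ioo hle1 continuous_const e1
  have I2 := intervalIntegrable_congr_Ioo hle2 (by fun_prop) e2
  have I3 := intervalIntegrable_congr_Ioo hle3 (by fun_prop) e3
  rw [← intervalIntegral.integral_add_adjacent_intervals I1 (I2.trans I3),
      ← intervalIntegral.integral_add_adjacent_intervals I2 I3,
      integral_congr_Ioo hle1 e1, integral_congr_Ioo hle2 e2, integral_congr_Ioo hle3 e3,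
      int_aff, int_aff]
  simp only [Phi, intervalIntegral.integral_zero]
  ring

private lemma cell_generic (h : ℝ) (hh : 0 < h) (v w : ℝ → ℝ)
    (A0 A A' B0 B B' s L R : ℝ)
    (hL : L ≤ s - h) (hR : s + 2*h ≤ R)
    (hv1 : ∀ y ∈ Set.Icc (s-h) s, v y = v s - A0*(s-y))
    (hv2 : ∀ y ∈ Set.Icc s (s+h), v y = v s + A*(y-s))
    (hv3 : ∀ y ∈ Set.Icc (s+h) (s+2*h), v y = (v s + A*h) + A'*(y-(s+h)))
    (hw1 : ∀ y ∈ Set.Icc (s-h) s, w y = w s - B0*(s-y))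
    (hw2 : ∀ y ∈ Set.Icc s (s+h), w y = w s + B*(y-s))
    (hw3 : ∀ y ∈ Set.Icc (s+h) (s+2*h), w y = (w s + B*h) + B'*(y-(s+h)))  :
    IntervalIntegrable (fun x => ∫ y in L..R,
        if |y - x| < h then h⁻¹ ^ 3 * ((v y - v x) * (w y - w x)) else 0) volume s (s+h) ∧
    (∫ x in s..(s+h), ∫ y in L..R,
        if |y - x| < h then h⁻¹ ^ 3 * ((v y - v x) * (w y - w x)) else 0) =
      h*(A0*B0/12 + (A0*B + A*B0)/24 + A*B/3 + (A*B' + A'*B)/24 + A'*B'/12) := by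
  obtain ⟨ii, val⟩ := finish_cell
    (fun x => ∫ y in L..R, if |y - x| < h then h⁻¹ ^ 3 * ((v y - v x) * (w y - w x)) else 0)
    s h _ _ _ _ hh
    (fun x hx => heart_generic h hh v w A0 A A' B0 B B' s L R hL hR hv1 hv2 hv3 hw1 hw2 hw3 x hx)
  refine ⟨ii, val.trans ?_⟩
  have h0 : h ≠ 0 := ne_of_gt hh
  field_simp
  ring

private lemma cell_first (h : ℝ) (hh : 0 < h) (v w : ℝ → ℝ)
    (A A' B B' s R : ℝ)
    (hR : s + 2*h ≤ R)
    (hv2 : ∀ y ∈ Set.Icc s (s+h), v y = v s + A*(y-s))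
    (hv3 : ∀ y ∈ Set.Icc (s+h) (s+2*h), v y = (v s + A*h) + A'*(y-(s+h)))
    (hw2 : ∀ y ∈ Set.Icc s (s+h), w y = w s + B*(y-s))
    (hw3 : ∀ y ∈ Set.Icc (s+h) (s+2*h), w y = (w s + B*h) + B'*(y-(s+h))) :
    IntervalIntegrable (fun x => ∫ y in s..R,
        if |y - x| < h then h⁻¹ ^ 3 * ((v y - v x) * (w y - w x)) else 0) volume s (s+h) ∧
    (∫ x in s..(s+h), ∫ y in s..R,
        if |y - x| < h then h⁻¹ ^ 3 * ((v y - v x) * (w y - w x)) else 0) =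
      h*(A*B/4 + (A*B' + A'*B)/24 + A'*B'/12) := by
  obtain ⟨ii, val⟩ := finish_cell
    (fun x => ∫ y in s..R, if |y - x| < h then h⁻¹ ^ 3 * ((v y - v x) * (w y - w x)) else 0)
    s h _ _ _ _ hh
    (fun x hx => heart_first h hh v w A A' B B' s R hR hv2 hv3 hw2 hw3 x hx)
  refine ⟨ii, val.trans ?_⟩
  have h0 : h ≠ 0 := ne_of_gt hh
  field_simp
  ring

private lemma cell_last (h : ℝ) (hh : 0 < h) (v w : ℝ → ℝ)
    (A0 A B0 B s L : ℝ)
    (hL : L ≤ s - h)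
    (hv1 : ∀ y ∈ Set.Icc (s-h) s, v y = v s - A0*(s-y))
    (hv2 : ∀ y ∈ Set.Icc s (s+h), v y = v s + A*(y-s))
    (hw1 : ∀ y ∈ Set.Icc (s-h) s, w y = w s - B0*(s-y))
    (hw2 : ∀ y ∈ Set.Icc s (s+h), w y = w s + B*(y-s)) :
    IntervalIntegrable (fun x => ∫ y in L..(s+h),
        if |y - x| < h then h⁻¹ ^ 3 * ((v y - v x) * (w y - w x)) else 0) volume s (s+h) ∧
    (∫ x in s..(s+h), ∫ y in L..(s+h),
        if |y - x| < h then h⁻¹ ^ 3 * ((v y - v x) * (w y - w x)) else 0) =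
      h*(A0*B0/12 + (A0*B + A*B0)/24 + A*B/4) := by
  obtain ⟨ii, val⟩ := finish_cell
    (fun x => ∫ y in L..(s+h), if |y - x| < h then h⁻¹ ^ 3 * ((v y - v x) * (w y - w x)) else 0)
    s h _ _ _ _ hh
    (fun x hx => heart_last h hh v w A0 A B0 B s L hL hv1 hv2 hw1 hw2 x hx)
  refine ⟨ii, val.trans ?_⟩
  have h0 : h ≠ 0 := ne_of_gt hh
  field_simp
  ring
private lemma final_sum (h : ℝ) (a b : ℕ → ℝ) (m : ℕ)
    (ha1 : a 1 = 0) (hb1 : b 1 = 0) (haN : a (m+3) = 0) (hbN : b (m+3) = 0) :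
    (h*(a 1*b 1/4 + (a 1*b 2 + a 2*b 1)/24 + a 2*b 2/12))
    + (∑ k ∈ Finset.range (m+1),
        h*(a (k+1)*b (k+1)/12 + (a (k+1)*b (k+2) + a (k+2)*b (k+1))/24 + a (k+2)*b (k+2)/3
          + (a (k+2)*b (k+3) + a (k+3)*b (k+2))/24 + a (k+3)*b (k+3)/12))
    + (h*(a (m+2)*b (m+2)/12 + (a (m+2)*b (m+3) + a (m+3)*b (m+2))/24 + a (m+3)*b (m+3)/4))
    = (2*h/3) * ∑ i ∈ Finset.Icc 1 (m+3), a i * b i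
      - (h/12) * ∑ i ∈ Finset.Icc 1 (m+3-1), (a (i+1) - a i) * (b (i+1) - b i) := by
  have hS : ∑ i ∈ Finset.Icc 1 (m+3), a i * b i
      = (∑ k ∈ Finset.range (m+1), a (k+1)*b (k+1)) + a (m+2)*b (m+2) + a (m+3)*b (m+3) := by
    rw [← Finset.Ico_add_one_right_eq_Icc, Finset.sum_Ico_eq_sum_range,
      show m+3+1-1 = (m+1)+1+1 by omega, Finset.sum_range_succ, Finset.sum_range_succ]
    have e : ∑ k ∈ Finset.range (m+1), a (1+k)*b (1+k)
        = ∑ k ∈ Finset.range (m+1), a (k+1)*b (k+1) :=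
      Finset.sum_congr rfl (fun k _ => by rw [Nat.add_comm 1 k])
    rw [e, show 1+(m+1) = m+2 by omega, show 1+(m+1+1) = m+3 by omega]
  have hT : ∑ i ∈ Finset.Icc 1 (m+3-1), (a (i+1) - a i) * (b (i+1) - b i)
      = (∑ k ∈ Finset.range (m+1),
          (a (k+2)*b (k+2) + a (k+1)*b (k+1) - (a (k+1)*b (k+2) + a (k+2)*b (k+1))))
        + (a (m+3)*b (m+3) + a (m+2)*b (m+2) - (a (m+2)*b (m+3) + a (m+3)*b (m+2))) := by
    rw [show m+3-1 = m+2 by omega, ← Finset.Ico_add_one_right_eq_Icc, Finset.sum_Ico_eq_sum_range,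
      show m+2+1-1 = (m+1)+1 by omega, Finset.sum_range_succ]
    have e : ∑ k ∈ Finset.range (m+1), (a (1+k+1) - a (1+k))*(b (1+k+1) - b (1+k))
        = ∑ k ∈ Finset.range (m+1),
            (a (k+2)*b (k+2) + a (k+1)*b (k+1) - (a (k+1)*b (k+2) + a (k+2)*b (k+1))) :=
      Finset.sum_congr rfl (fun k _ => by
        rw [show 1+k+1 = k+2 by omega, show 1+k = k+1 by omega]; ring)
    rw [e, show 1+(m+1)+1 = m+3 by omega, show 1+(m+1) = m+2 by omega]
    ring
  have hP12 : (∑ k ∈ Finset.range (m+1), a (k+2)*b (k+2))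
      - (∑ k ∈ Finset.range (m+1), a (k+1)*b (k+1)) = a (m+2)*b (m+2) - a 1*b 1 := by
    have t := Finset.sum_range_sub (f := fun k => a (k+1)*b (k+1)) (n := m+1)
    simp only [show ∀ k:ℕ, k+1+1 = k+2 from fun k => by omega] at t
    norm_num at t
    exact t
  have hP23 : (∑ k ∈ Finset.range (m+1), a (k+3)*b (k+3))
      - (∑ k ∈ Finset.range (m+1), a (k+2)*b (k+2)) = a (m+3)*b (m+3) - a 2*b 2 := by
    have t := Finset.sum_range_sub (f := fun k => a (k+2)*b (k+2)) (n := m+1)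
    simp only [show ∀ k:ℕ, k+1+2 = k+3 from fun k => by omega] at t
    norm_num at t
    exact t
  have hQ12 : (∑ k ∈ Finset.range (m+1), (a (k+2)*b (k+3) + a (k+3)*b (k+2)))
      - (∑ k ∈ Finset.range (m+1), (a (k+1)*b (k+2) + a (k+2)*b (k+1)))
      = (a (m+2)*b (m+3) + a (m+3)*b (m+2)) - (a 1*b 2 + a 2*b 1) := by
    have t := Finset.sum_range_sub (f := fun k => a (k+1)*b (k+2) + a (k+2)*b (k+1)) (n := m+1)
    have e : ∀ k : ℕ, a (k+1+1)*b (k+1+2) + a (k+1+2)*b (k+1+1)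
        = a (k+2)*b (k+3) + a (k+3)*b (k+2) := by
      intro k
      rw [show k+1+1 = k+2 by omega, show k+1+2 = k+3 by omega]
    simp only [e] at t
    norm_num at t
    exact t
  have hMid : (∑ k ∈ Finset.range (m+1),
        h*(a (k+1)*b (k+1)/12 + (a (k+1)*b (k+2) + a (k+2)*b (k+1))/24 + a (k+2)*b (k+2)/3
          + (a (k+2)*b (k+3) + a (k+3)*b (k+2))/24 + a (k+3)*b (k+3)/12))
      = h/12 * (∑ k ∈ Finset.range (m+1), a (k+1)*b (k+1))
        + (h/24 * (∑ k ∈ Finset.range (m+1), (a (k+1)*b (k+2) + a (k+2)*b (k+1)))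
        + (h/3 * (∑ k ∈ Finset.range (m+1), a (k+2)*b (k+2))
        + (h/24 * (∑ k ∈ Finset.range (m+1), (a (k+2)*b (k+3) + a (k+3)*b (k+2)))
        + h/12 * (∑ k ∈ Finset.range (m+1), a (k+3)*b (k+3))))) := by
    have e : ∀ k ∈ Finset.range (m+1),
        h*(a (k+1)*b (k+1)/12 + (a (k+1)*b (k+2) + a (k+2)*b (k+1))/24 + a (k+2)*b (k+2)/3
          + (a (k+2)*b (k+3) + a (k+3)*b (k+2))/24 + a (k+3)*b (k+3)/12)
        = h/12 * (a (k+1)*b (k+1))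
          + (h/24 * (a (k+1)*b (k+2) + a (k+2)*b (k+1))
          + (h/3 * (a (k+2)*b (k+2))
          + (h/24 * (a (k+2)*b (k+3) + a (k+3)*b (k+2))
          + h/12 * (a (k+3)*b (k+3))))) := fun k _ => by ring
    rw [Finset.sum_congr rfl e, Finset.sum_add_distrib, Finset.sum_add_distrib,
      Finset.sum_add_distrib, Finset.sum_add_distrib,
      ← Finset.mul_sum, ← Finset.mul_sum, ← Finset.mul_sum, ← Finset.mul_sum, ← Finset.mul_sum]
  have hTs : ∑ k ∈ Finset.range (m+1),
      (a (k+2)*b (k+2) + a (k+1)*b (k+1) - (a (k+1)*b (k+2) + a (k+2)*b (k+1)))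
      = (∑ k ∈ Finset.range (m+1), a (k+2)*b (k+2))
        + (∑ k ∈ Finset.range (m+1), a (k+1)*b (k+1))
        - (∑ k ∈ Finset.range (m+1), (a (k+1)*b (k+2) + a (k+2)*b (k+1))) := by
    rw [Finset.sum_sub_distrib, Finset.sum_add_distrib]
  rw [hMid, hS, hT]
  simp only [ha1, hb1, haN, hbN, zero_mul, mul_zero, add_zero, zero_add, sub_zero] at hP12 hP23 hQ12 ⊢
  linear_combination (h/2)*hP12 + (h/12)*hP23 + (h/24)*hQ12 + (h/12)*hTs

private lemma sum_expand (m : ℕ) (f : ℕ → ℝ) :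
    ∑ k ∈ Finset.range (m+3), f k
      = f 0 + (∑ k ∈ Finset.range (m+1), f (k+1)) + f (m+2) := by
  rw [show m+3 = (m+2)+1 by omega, Finset.sum_range_succ, show m+2 = (m+1)+1 by omega,
    Finset.sum_range_succ']
  ring



/-- Exact evaluation of the nonlocal energy bilinear form with constant kernel
`γ(x,y) = h⁻³·1_{|y−x|<h}` (horizon `δ = h`) on a uniform one-dimensional grid, for
continuous piecewise-linear functions `v, w` vanishing on the first and last element:
`D(v,w) = (2h/3)·∑ aᵢbᵢ − (h/12)·∑ (aᵢ₊₁−aᵢ)(bᵢ₊₁−bᵢ)`. -/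
theorem nonlocal_bilinear_form_piecewise_linear
    (h : ℝ) (hh : 0 < h) (N : ℕ) (hN : 3 ≤ N)
    (v w : ℝ → ℝ) (hv : Continuous v) (hw : Continuous w)
    (a b : ℕ → ℝ)
    (hv0 : ∀ x : ℝ, x ≤ h ∨ ((N : ℝ) - 1) * h ≤ x → v x = 0)
    (hw0 : ∀ x : ℝ, x ≤ h ∨ ((N : ℝ) - 1) * h ≤ x → w x = 0)
    (hva : ∀ i ∈ Finset.Icc 1 N, ∀ x ∈ Set.Icc (((i : ℝ) - 1) * h) ((i : ℝ) * h),
      v x = v (((i : ℝ) - 1) * h) + a i * (x - ((i : ℝ) - 1) * h))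
    (hwb : ∀ i ∈ Finset.Icc 1 N, ∀ x ∈ Set.Icc (((i : ℝ) - 1) * h) ((i : ℝ) * h),
      w x = w (((i : ℝ) - 1) * h) + b i * (x - ((i : ℝ) - 1) * h)) :
    (∫ x in (0 : ℝ)..(N : ℝ) * h, ∫ y in (0 : ℝ)..(N : ℝ) * h,
        (if |y - x| < h then h⁻¹ ^ 3 * ((v y - v x) * (w y - w x)) else 0)) =
      (2 * h / 3) * ∑ i ∈ Finset.Icc 1 N, a i * b i -
        (h / 12) * ∑ i ∈ Finset.Icc 1 (N - 1), (a (i + 1) - a i) * (b (i + 1) - b i) := by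
  obtain ⟨m, rfl⟩ : ∃ m, N = m + 3 := ⟨N - 3, by omega⟩
  have hne : h ≠ 0 := ne_of_gt hh
  -- end slopes vanish
  have ha1 : a 1 = 0 := by
    have h1 := hva 1 (Finset.mem_Icc.2 ⟨le_rfl, by omega⟩) h
      (by constructor <;> push_cast <;> nlinarith [hh.le])
    have hA : v h = 0 := hv0 h (Or.inl le_rfl)
    have hB : v ((((1:ℕ):ℝ) - 1) * h) = 0 := hv0 _ (Or.inl (by push_cast; nlinarith [hh.le]))
    rw [hA, hB] at h1
    push_cast at h1
    have h2 : a 1 * h = 0 := by linear_combination -h1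
    exact (mul_eq_zero.1 h2).resolve_right hne
  have hb1 : b 1 = 0 := by
    have h1 := hwb 1 (Finset.mem_Icc.2 ⟨le_rfl, by omega⟩) h
      (by constructor <;> push_cast <;> nlinarith [hh.le])
    have hA : w h = 0 := hw0 h (Or.inl le_rfl)
    have hB : w ((((1:ℕ):ℝ) - 1) * h) = 0 := hw0 _ (Or.inl (by push_cast; nlinarith [hh.le]))
    rw [hA, hB] at h1
    push_cast at h1
    have h2 : b 1 * h = 0 := by linear_combination -h1
    exact (mul_eq_zero.1 h2).resolve_right hne
  have haN : a (m+3) = 0 := by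
    have h1 := hva (m+3) (Finset.mem_Icc.2 ⟨by omega, le_rfl⟩) (((m+3:ℕ):ℝ) * h)
      (by constructor <;> push_cast <;> nlinarith [hh.le])
    have hA : v (((m+3:ℕ):ℝ) * h) = 0 := hv0 _ (Or.inr (by push_cast; nlinarith [hh.le]))
    have hB : v ((((m+3:ℕ):ℝ) - 1) * h) = 0 := hv0 _ (Or.inr le_rfl)
    rw [hA, hB] at h1
    push_cast at h1
    have h2 : a (m+3) * h = 0 := by linear_combination -h1
    exact (mul_eq_zero.1 h2).resolve_right hne
  have hbN : b (m+3) = 0 := by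
    have h1 := hwb (m+3) (Finset.mem_Icc.2 ⟨by omega, le_rfl⟩) (((m+3:ℕ):ℝ) * h)
      (by constructor <;> push_cast <;> nlinarith [hh.le])
    have hA : w (((m+3:ℕ):ℝ) * h) = 0 := hw0 _ (Or.inr (by push_cast; nlinarith [hh.le]))
    have hB : w ((((m+3:ℕ):ℝ) - 1) * h) = 0 := hw0 _ (Or.inr le_rfl)
    rw [hA, hB] at h1
    push_cast at h1
    have h2 : b (m+3) * h = 0 := by linear_combination -h1
    exact (mul_eq_zero.1 h2).resolve_right hne
  -- local cell formulas
  have cellv : ∀ k : ℕ, k < m+3 → ∀ y ∈ Set.Icc ((k:ℝ)*h) ((k:ℝ)*h + h),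
      v y = v ((k:ℝ)*h) + a (k+1) * (y - (k:ℝ)*h) := by
    intro k hk y hy
    have e1 : ((k+1:ℕ):ℝ) - 1 = (k:ℝ) := by push_cast; ring
    have e2 : ((k+1:ℕ):ℝ) * h = (k:ℝ)*h + h := by push_cast; ring
    have t := hva (k+1) (Finset.mem_Icc.2 ⟨by omega, by omega⟩) y (by rw [Set.mem_Icc, e1, e2]; exact hy)
    rw [e1] at t
    exact t
  have cellw : ∀ k : ℕ, k < m+3 → ∀ y ∈ Set.Icc ((k:ℝ)*h) ((k:ℝ)*h + h),
      w y = w ((k:ℝ)*h) + b (k+1) * (y - (k:ℝ)*h) := by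
    intro k hk y hy
    have e1 : ((k+1:ℕ):ℝ) - 1 = (k:ℝ) := by push_cast; ring
    have e2 : ((k+1:ℕ):ℝ) * h = (k:ℝ)*h + h := by push_cast; ring
    have t := hwb (k+1) (Finset.mem_Icc.2 ⟨by omega, by omega⟩) y (by rw [Set.mem_Icc, e1, e2]; exact hy)
    rw [e1] at t
    exact t
  -- first cell
  have Cfirst := cell_first h hh v w (a 1) (a 2) (b 1) (b 2) 0 (((m+3:ℕ):ℝ)*h)
    (by push_cast; nlinarith [hh.le, Nat.cast_nonneg (α := ℝ) m])
    (by
      intro y hy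
      have e0 : ((0:ℕ):ℝ)*h = 0 := by norm_num
      have t := cellv 0 (by omega) y (by rw [e0]; exact hy)
      rw [e0] at t
      simpa using t)
    (by
      intro y hy
      have e0 : ((0:ℕ):ℝ)*h = 0 := by norm_num
      have e1 : ((1:ℕ):ℝ)*h = 0 + h := by norm_num
      have t1 := cellv 1 (by omega) y (by rw [e1]; exact ⟨by linarith [hy.1], by linarith [hy.2]⟩)
      rw [e1, show (1:ℕ)+1 = 2 from rfl] at t1
      have t2 := cellv 0 (by omega) ((0:ℝ)+h) (by rw [e0]; exact ⟨by linarith [hh.le], le_rfl⟩)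
      rw [e0, show (0:ℕ)+1 = 1 from rfl] at t2
      linear_combination t1 + t2)
    (by
      intro y hy
      have e0 : ((0:ℕ):ℝ)*h = 0 := by norm_num
      have t := cellw 0 (by omega) y (by rw [e0]; exact hy)
      rw [e0] at t
      simpa using t)
    (by
      intro y hy
      have e0 : ((0:ℕ):ℝ)*h = 0 := by norm_num
      have e1 : ((1:ℕ):ℝ)*h = 0 + h := by norm_num
      have t1 := cellw 1 (by omega) y (by rw [e1]; exact ⟨by linarith [hy.1], by linarith [hy.2]⟩)
      rw [e1, show (1:ℕ)+1 = 2 from rfl] at t1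
      have t2 := cellw 0 (by omega) ((0:ℝ)+h) (by rw [e0]; exact ⟨by linarith [hh.le], le_rfl⟩)
      rw [e0, show (0:ℕ)+1 = 1 from rfl] at t2
      linear_combination t1 + t2)
  -- middle cells
  have Cmid : ∀ k : ℕ, 1 ≤ k → k ≤ m+1 →
      IntervalIntegrable (fun x => ∫ y in (0:ℝ)..(((m+3:ℕ):ℝ)*h),
          if |y - x| < h then h⁻¹ ^ 3 * ((v y - v x) * (w y - w x)) else 0) volume
        ((k:ℝ)*h) ((k:ℝ)*h + h) ∧
      (∫ x in ((k:ℝ)*h)..((k:ℝ)*h + h), ∫ y in (0:ℝ)..(((m+3:ℕ):ℝ)*h),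
          if |y - x| < h then h⁻¹ ^ 3 * ((v y - v x) * (w y - w x)) else 0)
        = h*(a k*b k/12 + (a k*b (k+1) + a (k+1)*b k)/24 + a (k+1)*b (k+1)/3
            + (a (k+1)*b (k+2) + a (k+2)*b (k+1))/24 + a (k+2)*b (k+2)/12) := by
    intro k hk1 hk2
    have hc1 : (1:ℝ) ≤ (k:ℝ) := by exact_mod_cast hk1
    have hc2 : (k:ℝ) ≤ (m:ℝ)+1 := by exact_mod_cast hk2
    have ekm : ((k-1:ℕ):ℝ)*h = (k:ℝ)*h - h := by
      rw [Nat.cast_sub hk1, Nat.cast_one]; ring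
    have ekp : ((k+1:ℕ):ℝ)*h = (k:ℝ)*h + h := by push_cast; ring
    refine cell_generic h hh v w (a k) (a (k+1)) (a (k+2)) (b k) (b (k+1)) (b (k+2))
      ((k:ℝ)*h) 0 (((m+3:ℕ):ℝ)*h)
      (by nlinarith [mul_nonneg (by linarith : (0:ℝ) ≤ (k:ℝ)-1) hh.le])
      (by push_cast; nlinarith [mul_nonneg (by linarith : (0:ℝ) ≤ (m:ℝ)+1-(k:ℝ)) hh.le])
      ?_ (cellv k (by omega)) ?_ ?_ (cellw k (by omega)) ?_
    · intro y hy
      have t1 := cellv (k-1) (by omega) y (by rw [ekm]; exact ⟨by linarith [hy.1], by linarith [hy.2]⟩)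
      have t2 := cellv (k-1) (by omega) ((k:ℝ)*h) (by rw [ekm]; exact ⟨by linarith [hh.le], by linarith⟩)
      rw [ekm, show k-1+1 = k by omega] at t1 t2
      linear_combination t1 - t2
    · intro y hy
      have t1 := cellv (k+1) (by omega) y (by rw [ekp]; exact ⟨by linarith [hy.1], by linarith [hy.2]⟩)
      rw [ekp, show k+1+1 = k+2 by omega] at t1
      have t2 := cellv k (by omega) ((k:ℝ)*h + h) ⟨by linarith [hh.le], le_rfl⟩
      linear_combination t1 + t2
    · intro y hy
      have t1 := cellw (k-1) (by omega) y (by rw [ekm]; exact ⟨by linarith [hy.1], by linarith [hy.2]⟩)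
      have t2 := cellw (k-1) (by omega) ((k:ℝ)*h) (by rw [ekm]; exact ⟨by linarith [hh.le], by linarith⟩)
      rw [ekm, show k-1+1 = k by omega] at t1 t2
      linear_combination t1 - t2
    · intro y hy
      have t1 := cellw (k+1) (by omega) y (by rw [ekp]; exact ⟨by linarith [hy.1], by linarith [hy.2]⟩)
      rw [ekp, show k+1+1 = k+2 by omega] at t1
      have t2 := cellw k (by omega) ((k:ℝ)*h + h) ⟨by linarith [hh.le], le_rfl⟩
      linear_combination t1 + t2
  -- last cell
  have hc3 : ((m+2:ℕ):ℝ)*h + h = ((m+3:ℕ):ℝ)*h := by push_cast; ring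
  have ekm2 : ((m+1:ℕ):ℝ)*h = ((m+2:ℕ):ℝ)*h - h := by push_cast; ring
  have Clast := cell_last h hh v w (a (m+2)) (a (m+3)) (b (m+2)) (b (m+3)) (((m+2:ℕ):ℝ)*h) 0
    (by push_cast; nlinarith [mul_nonneg (by positivity : (0:ℝ) ≤ (m:ℝ)+1) hh.le])
    (by
      intro y hy
      have t1 := cellv (m+1) (by omega) y (by rw [ekm2]; exact ⟨by linarith [hy.1], by linarith [hy.2]⟩)
      have t2 := cellv (m+1) (by omega) (((m+2:ℕ):ℝ)*h) (by rw [ekm2]; exact ⟨by linarith [hh.le], by linarith⟩)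
      rw [ekm2, show m+1+1 = m+2 by omega] at t1 t2
      linear_combination t1 - t2)
    (by
      have t := cellv (m+2) (by omega)
      rw [show m+2+1 = m+3 by omega] at t
      exact t)
    (by
      intro y hy
      have t1 := cellw (m+1) (by omega) y (by rw [ekm2]; exact ⟨by linarith [hy.1], by linarith [hy.2]⟩)
      have t2 := cellw (m+1) (by omega) (((m+2:ℕ):ℝ)*h) (by rw [ekm2]; exact ⟨by linarith [hh.le], by linarith⟩)
      rw [ekm2, show m+1+1 = m+2 by omega] at t1 t2
      linear_combination t1 - t2)
    (by
      have t := cellw (m+2) (by omega)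
      rw [show m+2+1 = m+3 by omega] at t
      exact t)
  rw [hc3] at Clast
  -- split the outer integral
  have hint : ∀ k, k < m+3 → IntervalIntegrable
      (fun x => ∫ y in (0:ℝ)..(((m+3:ℕ):ℝ)*h),
        if |y - x| < h then h⁻¹ ^ 3 * ((v y - v x) * (w y - w x)) else 0) volume
      ((k:ℝ)*h) (((k+1:ℕ):ℝ)*h) := by
    intro k hk
    by_cases hk0 : k = 0
    · subst hk0
      rw [show ((0:ℕ):ℝ)*h = (0:ℝ) by norm_num, show ((0+1:ℕ):ℝ)*h = (0:ℝ)+h by norm_num]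
      exact Cfirst.1
    · by_cases hk2 : k = m+2
      · subst hk2
        rw [show ((m+2+1:ℕ):ℝ)*h = ((m+3:ℕ):ℝ)*h by push_cast; ring]
        exact Clast.1
      · rw [show ((k+1:ℕ):ℝ)*h = (k:ℝ)*h + h by push_cast; ring]
        exact (Cmid k (by omega) (by omega)).1
  have hadj := intervalIntegral.sum_integral_adjacent_intervals
    (a := fun i : ℕ => (i:ℝ)*h) (μ := volume) hint
  simp only [Nat.cast_zero, zero_mul] at hadj
  rw [← hadj]
  -- evaluate each cell
  have hval : ∑ k ∈ Finset.range (m+3), (∫ x in ((k:ℝ)*h)..(((k+1:ℕ):ℝ)*h),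
      ∫ y in (0:ℝ)..(((m+3:ℕ):ℝ)*h),
        if |y - x| < h then h⁻¹ ^ 3 * ((v y - v x) * (w y - w x)) else 0)
      = ∑ k ∈ Finset.range (m+3),
        (if k = 0 then h*(a 1*b 1/4 + (a 1*b 2 + a 2*b 1)/24 + a 2*b 2/12)
         else if k = m+2 then
           h*(a (m+2)*b (m+2)/12 + (a (m+2)*b (m+3) + a (m+3)*b (m+2))/24 + a (m+3)*b (m+3)/4)
         else
           h*(a k*b k/12 + (a k*b (k+1) + a (k+1)*b k)/24 + a (k+1)*b (k+1)/3
             + (a (k+1)*b (k+2) + a (k+2)*b (k+1))/24 + a (k+2)*b (k+2)/12)) := by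
    refine Finset.sum_congr rfl (fun k hk => ?_)
    have hkm : k < m+3 := Finset.mem_range.1 hk
    by_cases hk0 : k = 0
    · subst hk0
      rw [if_pos rfl, show ((0:ℕ):ℝ)*h = (0:ℝ) by norm_num,
        show ((0+1:ℕ):ℝ)*h = (0:ℝ)+h by norm_num]
      exact Cfirst.2
    · by_cases hk2 : k = m+2
      · subst hk2
        rw [if_neg (by omega), if_pos rfl,
          show ((m+2+1:ℕ):ℝ)*h = ((m+3:ℕ):ℝ)*h by push_cast; ring]
        exact Clast.2
      · rw [if_neg hk0, if_neg hk2, show ((k+1:ℕ):ℝ)*h = (k:ℝ)*h + h by push_cast; ring]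
        exact (Cmid k (by omega) (by omega)).2
  rw [hval, sum_expand]
  rw [if_pos rfl, if_neg (show ¬ m+2 = 0 by omega), if_pos rfl]
  have hmid : ∀ k ∈ Finset.range (m+1),
      (if k+1 = 0 then h*(a 1*b 1/4 + (a 1*b 2 + a 2*b 1)/24 + a 2*b 2/12)
       else if k+1 = m+2 then
         h*(a (m+2)*b (m+2)/12 + (a (m+2)*b (m+3) + a (m+3)*b (m+2))/24 + a (m+3)*b (m+3)/4)
       else
         h*(a (k+1)*b (k+1)/12 + (a (k+1)*b (k+1+1) + a (k+1+1)*b (k+1))/24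
           + a (k+1+1)*b (k+1+1)/3
           + (a (k+1+1)*b (k+1+2) + a (k+1+2)*b (k+1+1))/24 + a (k+1+2)*b (k+1+2)/12))
      = h*(a (k+1)*b (k+1)/12 + (a (k+1)*b (k+2) + a (k+2)*b (k+1))/24 + a (k+2)*b (k+2)/3
          + (a (k+2)*b (k+3) + a (k+3)*b (k+2))/24 + a (k+3)*b (k+3)/12) := by
    intro k hk
    have := Finset.mem_range.1 hk
    rw [if_neg (by omega), if_neg (by omega), show k+1+1 = k+2 by omega,
      show k+1+2 = k+3 by omega]
  rw [Finset.sum_congr rfl hmid]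
  exact final_sum h a b m ha1 hb1 haN hbN
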